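/- Define *L_0 = *L, *R_0 = *R, *L_n = {*L_{n-1},...,*L_0}, *R_n = {*R_{n-1},...,*R_0}. For all nonnegative integers a_1, a_2: *L_{a_1} + *L_{a_2} ≡ *L_{a_1 ⊕ a_2}, *L_{a_1} + *R_{a_2} ≡ *R_{a_1 ⊕ a_2}, and *R_{a_1} + *R_{a_2} ≡ *L_{a_1 ⊕ a_2}, where ⊕ denotes bitwise XOR (nim-sum). -/

import Mathlib

/-- Positions of LR-ending partisan games: two terminals and finite option sets
(represented as lists; set-like behavior is captured by the `Iso` relation). -/
inductive Pos : Type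
  | termL : Pos
  | termR : Pos
  | opts : List Pos → Pos

namespace Pos

/-- Valid positions: every non-terminal position has a nonempty set of options. -/
inductive Valid : Pos → Prop
  | termL : Valid termL
  | termR : Valid termR
  | opts : ∀ gs : List Pos, gs ≠ [] → (∀ g ∈ gs, Valid g) → Valid (opts gs)

/-- Disjunctive sum. -/
def sum : Pos → Pos → Pos
  | termL, termL => termL
  | termL, termR => termR
  | termR, termL => termR
  | termR, termR => termL
  | termL, opts hs => opts (hs.attach.map (fun h => sum termL h.1))
  | termR, opts hs => opts (hs.attach.map (fun h => sum termR h.1))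
  | opts gs, termL => opts (gs.attach.map (fun g => sum g.1 termL))
  | opts gs, termR => opts (gs.attach.map (fun g => sum g.1 termR))
  | opts gs, opts hs =>
      opts (gs.attach.map (fun g => sum g.1 (opts hs)) ++
            hs.attach.map (fun h => sum (opts gs) h.1))
termination_by g h => sizeOf g + sizeOf h
decreasing_by
  all_goals
    first
      | (have := List.sizeOf_lt_of_mem h.2; simp_all; omega)
      | (have := List.sizeOf_lt_of_mem g.2; simp_all; omega)

/-- Conjugate: swap the two kinds of terminal positions. -/
def conj : Pos → Pos
  | termL => termR
  | termR => termL
  | opts gs => opts (gs.attach.map (fun g => conj g.1))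
decreasing_by
  have := List.sizeOf_lt_of_mem g.2; simp_all; omega

/-- Isomorphism of game trees (positions viewed as sets of options). -/
def Iso : Pos → Pos → Prop
  | termL, termL => True
  | termR, termR => True
  | opts gs, opts hs =>
      (∀ g ∈ gs.attach, ∃ h ∈ hs.attach, Iso g.1 h.1) ∧
      (∀ h ∈ hs.attach, ∃ g ∈ gs.attach, Iso g.1 h.1)
  | _, _ => False
termination_by g h => sizeOf g + sizeOf h
decreasing_by
  all_goals
    (have hg := List.sizeOf_lt_of_mem g.2; have hh := List.sizeOf_lt_of_mem h.2;
     simp_all; omega)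

inductive Player : Type
  | left : Player
  | right : Player
  deriving DecidableEq

/-- `Wins p b G` : player `p` has a winning strategy from position `G`,
where `b = true` means it is `p`'s turn to move and `b = false` means the
opponent is to move.  A terminal position is won by the player given by
its label, regardless of whose turn it is. -/
inductive Wins : Player → Bool → Pos → Prop
  | termL : ∀ b, Wins Player.left b termL
  | termR : ∀ b, Wins Player.right b termR
  | move : ∀ (p : Player) (gs : List Pos) (g : Pos), g ∈ gs →
      Wins p false g → Wins p true (opts gs)
  | wait : ∀ (p : Player) (gs : List Pos),
      (∀ g, g ∈ gs → Wins p true g) → Wins p false (opts gs)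

inductive Outcome : Type
  | L : Outcome
  | R : Outcome
  | N : Outcome
  | P : Outcome
  deriving DecidableEq

/-- The outcome of a position. -/
noncomputable def outcome (G : Pos) : Outcome := by
  classical
  exact
    if Wins Player.left true G then
      if Wins Player.left false G then Outcome.L else Outcome.N
    else
      if Wins Player.left false G then Outcome.P else Outcome.R

/-- Equivalence of positions: the outcome agrees in every (valid) context. -/
def equiv (G H : Pos) : Prop :=
  ∀ X : Pos, Valid X → outcome (sum G X) = outcome (sum H X)

end Pos
namespace Pos

mutual
/-- `Ln n` is the position `*L_n`: `*L_0 = *L`, `*L_n = {*L_{n-1}, ..., *L_0}`. -/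
def Ln : ℕ → Pos
  | 0 => termL
  | n + 1 => opts (LnList (n + 1))
termination_by n => 2 * n + 1
/-- `LnList n = [*L_{n-1}, ..., *L_0]`. -/
def LnList : ℕ → List Pos
  | 0 => []
  | n + 1 => Ln n :: LnList n
termination_by n => 2 * n
end

mutual
/-- `Rn n` is the position `*R_n`. -/
def Rn : ℕ → Pos
  | 0 => termR
  | n + 1 => opts (RnList (n + 1))
termination_by n => 2 * n + 1
def RnList : ℕ → List Pos
  | 0 => []
  | n + 1 => Rn n :: RnList n
termination_by n => 2 * n
end

/-- `kome n` is `✠_n = {*L_{n-1}, *R_{n-1}, ..., *L_0, *R_0}` (for `n ≥ 1`). -/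
def kome (n : ℕ) : Pos := opts (LnList n ++ RnList n)

mutual
/-- `starAux n` represents `★(n+1)`: `★1 = {*L, *R}`, `★n = {★(n-1),...,★1,*L,*R}`. -/
def starAux : ℕ → Pos
  | 0 => opts [termL, termR]
  | n + 1 => opts (starList (n + 1) ++ [termL, termR])
termination_by n => 2 * n + 1
/-- `starList n = [★n, ..., ★1]`. -/
def starList : ℕ → List Pos
  | 0 => []
  | n + 1 => starAux n :: starList n
termination_by n => 2 * n
end

/-- `bigstar n` is `★n` (meaningful for `n ≥ 1`). -/
def bigstar (n : ℕ) : Pos := starAux (n - 1)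

/-- Sum of a list of positions (`*L` is the empty sum, and `G + *L = G`). -/
def sumList (l : List Pos) : Pos := l.foldr sum termL

/-- Nim-sum (XOR) of a list of naturals. -/
def xorList (l : List ℕ) : ℕ := l.foldr (· ^^^ ·) 0

/-- Minimum excludant of a list of naturals. -/
noncomputable def mexList (l : List ℕ) : ℕ := sInf {n : ℕ | n ∉ l}
/-- options of a position -/
def optsOf : Pos → List Pos
  | termL => []
  | termR => []
  | opts gs => gs

lemma sum_eq_opts (G X : Pos) (h : (∃ l, G = opts l) ∨ (∃ l, X = opts l)) :
    sum G X = opts ((optsOf G).map (·.sum X) ++ (optsOf X).map (G.sum ·)) := by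
  rcases G with _ | _ | gs <;> rcases X with _ | _ | xs <;>
    simp_all [sum, optsOf, List.map_subtype, List.unattach_attach]

lemma wins_termL {p : Player} {b : Bool} : Wins p b termL ↔ p = .left := by
  constructor
  · intro h; cases h; rfl
  · rintro rfl; exact .termL b

lemma wins_termR {p : Player} {b : Bool} : Wins p b termR ↔ p = .right := by
  constructor
  · intro h; cases h; rfl
  · rintro rfl; exact .termR b

lemma wins_true_opts {p : Player} {gs : List Pos} :
    Wins p true (opts gs) ↔ ∃ g ∈ gs, Wins p false g := by
  constructor
  · intro h; cases h with | move _ _ g hg hw => exact ⟨g, hg, hw⟩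
  · rintro ⟨g, hg, hw⟩; exact .move p gs g hg hw

lemma wins_false_opts {p : Player} {gs : List Pos} :
    Wins p false (opts gs) ↔ ∀ g ∈ gs, Wins p true g := by
  constructor
  · intro h; cases h with | wait _ _ hw => exact hw
  · intro h; exact .wait p gs h

theorem wins_excl (G : Pos) (p q : Player) (b : Bool) (hpq : p ≠ q)
    (h1 : Wins p b G) (h2 : Wins q (!b) G) : False :=
  match G, b with
  | termL, b => by rw [wins_termL] at h1 h2; exact hpq (h1.trans h2.symm)
  | termR, b => by rw [wins_termR] at h1 h2; exact hpq (h1.trans h2.symm)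
  | opts gs, true => by
      rw [wins_true_opts] at h1
      rw [Bool.not_true, wins_false_opts] at h2
      obtain ⟨g, hg, hw⟩ := h1
      exact wins_excl g p q false hpq hw (h2 g hg)
  | opts gs, false => by
      rw [wins_false_opts] at h1
      rw [Bool.not_false, wins_true_opts] at h2
      obtain ⟨g, hg, hw⟩ := h2
      exact wins_excl g q p false (Ne.symm hpq) hw (h1 g hg)
termination_by sizeOf G
decreasing_by all_goals (have := List.sizeOf_lt_of_mem hg; simp; omega)

mutual
/-- generic version of `Ln`/`Rn` with arbitrary terminal `t`. -/
def Xn (t : Pos) : ℕ → Pos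
  | 0 => t
  | n + 1 => opts (XnList t (n + 1))
termination_by n => 2 * n + 1
def XnList (t : Pos) : ℕ → List Pos
  | 0 => []
  | n + 1 => Xn t n :: XnList t n
termination_by n => 2 * n
end

@[simp] lemma Xn_zero (t : Pos) : Xn t 0 = t := by rw [Xn]
lemma Xn_succ (t : Pos) (n : ℕ) : Xn t (n + 1) = opts (XnList t (n + 1)) := by rw [Xn]
@[simp] lemma XnList_zero (t : Pos) : XnList t 0 = [] := by rw [XnList]
lemma XnList_succ (t : Pos) (n : ℕ) : XnList t (n + 1) = Xn t n :: XnList t n := by rw [XnList]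

lemma mem_XnList {t : Pos} {m n : ℕ} (h : m < n) : Xn t m ∈ XnList t n := by
  induction n with
  | zero => omega
  | succ n ih =>
    rw [XnList_succ]
    rcases Nat.lt_succ_iff_lt_or_eq.mp h with h | rfl
    · exact List.mem_cons_of_mem _ (ih h)
    · exact List.mem_cons_self

lemma mem_XnList_iff {t : Pos} {g : Pos} {n : ℕ} :
    g ∈ XnList t n ↔ ∃ m, m < n ∧ g = Xn t m := by
  constructor
  · intro h
    induction n with
    | zero => simp at h
    | succ n ih =>
      rw [XnList_succ] at h
      rcases List.mem_cons.mp h with rfl | h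
      · exact ⟨n, Nat.lt_succ_self n, rfl⟩
      · obtain ⟨m, hm, rfl⟩ := ih h
        exact ⟨m, by omega, rfl⟩
  · rintro ⟨m, hm, rfl⟩; exact mem_XnList hm

lemma optsOf_Xn {t : Pos} (ht : t = termL ∨ t = termR) (n : ℕ) :
    optsOf (Xn t n) = XnList t n := by
  cases n with
  | zero => rcases ht with rfl | rfl <;> simp [optsOf]
  | succ n => rw [Xn_succ]; rfl

lemma sum_Xn_opts {t : Pos} (ht : t = termL ∨ t = termR) {n : ℕ} (X : Pos)
    (h : 0 < n ∨ ∃ xs, X = opts xs) :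
    sum (Xn t n) X =
      opts ((XnList t n).map (·.sum X) ++ (optsOf X).map ((Xn t n).sum ·)) := by
  rw [← optsOf_Xn ht, sum_eq_opts]
  rcases h with h | h
  · left
    obtain ⟨m, rfl⟩ := Nat.exists_eq_add_of_lt h
    rw [Nat.zero_add, Xn_succ]
    exact ⟨_, rfl⟩
  · right; exact h

lemma Xn_termL : ∀ n, Xn termL n = Ln n ∧ XnList termL n = LnList n := by
  intro n
  induction n with
  | zero => simp [Ln, LnList]
  | succ n ih =>
    have hl : XnList termL (n + 1) = LnList (n + 1) := by
      rw [XnList_succ, LnList, ih.1, ih.2]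
    exact ⟨by rw [Xn_succ, hl, Ln], hl⟩

lemma Xn_termR : ∀ n, Xn termR n = Rn n ∧ XnList termR n = RnList n := by
  intro n
  induction n with
  | zero => simp [Rn, RnList]
  | succ n ih =>
    have hl : XnList termR (n + 1) = RnList (n + 1) := by
      rw [XnList_succ, RnList, ih.1, ih.2]
    exact ⟨by rw [Xn_succ, hl, Rn], hl⟩

lemma sizeOf_optsOf {X X' : Pos} (h : X' ∈ optsOf X) : sizeOf X' < sizeOf X := by
  cases X with
  | termL => simp [optsOf] at h
  | termR => simp [optsOf] at h
  | opts xs =>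
    simp only [optsOf] at h
    have := List.sizeOf_lt_of_mem h
    simp only [Pos.opts.sizeOf_spec]
    omega

lemma wins_drop {s : Pos} (hs : s = termL ∨ s = termR) {c c' : ℕ} (hlt : c < c')
    (X : Pos) (p : Player) :
    (Wins p false (sum (Xn s c') X) → Wins p true (sum (Xn s c) X)) ∧
    (Wins p false (sum (Xn s c) X) → Wins p true (sum (Xn s c') X)) := by
  have hR' := sum_Xn_opts hs X (Or.inl (show 0 < c' by omega))
  have hmem : sum (Xn s c) X ∈
      (XnList s c').map (·.sum X) ++ (optsOf X).map ((Xn s c').sum ·) :=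
    List.mem_append_left _ (List.mem_map.mpr ⟨_, mem_XnList hlt, rfl⟩)
  constructor
  · intro hw
    rw [hR', wins_false_opts] at hw
    exact hw _ hmem
  · intro hw
    rw [hR']
    exact .move p _ _ hmem hw

theorem master (t1 t2 : Pos) (ht1 : t1 = termL ∨ t1 = termR)
    (ht2 : t2 = termL ∨ t2 = termR) :
    ∀ (n a b : ℕ) (X : Pos) (p : Player) (tb : Bool), a + b + sizeOf X < n →
      (Wins p tb (sum (sum (Xn t1 a) (Xn t2 b)) X) ↔
       Wins p tb (sum (Xn (sum t1 t2) (a ^^^ b)) X)) := by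
  have hs : sum t1 t2 = termL ∨ sum t1 t2 = termR := by
    rcases ht1 with rfl | rfl <;> rcases ht2 with rfl | rfl <;> simp [sum]
  intro n
  induction n with
  | zero => intro a b X p tb h; omega
  | succ n ih =>
    intro a b X p tb hm
    by_cases hab : a = 0 ∧ b = 0
    · obtain ⟨rfl, rfl⟩ := hab
      simp only [Xn_zero, Nat.xor_self]
    · have hab' : 0 < a ∨ 0 < b := by omega
      have hXnopts : ∀ (t : Pos) (m : ℕ), 0 < m → ∃ l, Xn t m = opts l := by
        intro t m hmm
        cases m with
        | zero => omega
        | succ k => rw [Xn_succ]; exact ⟨_, rfl⟩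
      have hAB : sum (Xn t1 a) (Xn t2 b) =
          opts ((XnList t1 a).map (·.sum (Xn t2 b)) ++
                (XnList t2 b).map ((Xn t1 a).sum ·)) := by
        rw [← optsOf_Xn ht1, ← optsOf_Xn ht2, sum_eq_opts]
        rcases hab' with h | h
        · exact Or.inl (hXnopts t1 a h)
        · exact Or.inr (hXnopts t2 b h)
      have hL : sum (sum (Xn t1 a) (Xn t2 b)) X =
          opts ((XnList t1 a).map (fun A' => sum (sum A' (Xn t2 b)) X) ++
                (XnList t2 b).map (fun B' => sum (sum (Xn t1 a) B') X) ++
                (optsOf X).map (fun X' => sum (sum (Xn t1 a) (Xn t2 b)) X')) := by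
        conv_lhs => rw [hAB]
        rw [sum_eq_opts _ _ (Or.inl ⟨_, rfl⟩)]
        simp only [optsOf]
        rw [← hAB]
        simp only [List.map_append, List.map_map, Function.comp_def, List.append_assoc]
      have hmemL : ∀ o : Pos,
          (o ∈ (XnList t1 a).map (fun A' => sum (sum A' (Xn t2 b)) X) ++
                (XnList t2 b).map (fun B' => sum (sum (Xn t1 a) B') X) ++
                (optsOf X).map (fun X' => sum (sum (Xn t1 a) (Xn t2 b)) X')) ↔
          ((∃ a' < a, o = sum (sum (Xn t1 a') (Xn t2 b)) X) ∨
           (∃ b' < b, o = sum (sum (Xn t1 a) (Xn t2 b')) X) ∨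
           (∃ X' ∈ optsOf X, o = sum (sum (Xn t1 a) (Xn t2 b)) X')) := by
        intro o
        simp only [List.mem_append, List.mem_map, mem_XnList_iff]
        constructor
        · rintro ((⟨x, ⟨m, hmm, rfl⟩, rfl⟩ | ⟨x, ⟨m, hmm, rfl⟩, rfl⟩) | ⟨x, hx, rfl⟩)
          · exact Or.inl ⟨m, hmm, rfl⟩
          · exact Or.inr (Or.inl ⟨m, hmm, rfl⟩)
          · exact Or.inr (Or.inr ⟨x, hx, rfl⟩)
        · rintro (⟨a', ha', rfl⟩ | ⟨b', hb', rfl⟩ | ⟨X', hX', rfl⟩)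
          · exact Or.inl (Or.inl ⟨_, ⟨a', ha', rfl⟩, rfl⟩)
          · exact Or.inl (Or.inr ⟨_, ⟨b', hb', rfl⟩, rfl⟩)
          · exact Or.inr ⟨X', hX', rfl⟩
      have ihA : ∀ a' < a, ∀ (q : Player) (t' : Bool),
          (Wins q t' (sum (sum (Xn t1 a') (Xn t2 b)) X) ↔
           Wins q t' (sum (Xn (sum t1 t2) (a' ^^^ b)) X)) :=
        fun a' ha' q t' => ih a' b X q t' (by omega)
      have ihB : ∀ b' < b, ∀ (q : Player) (t' : Bool),
          (Wins q t' (sum (sum (Xn t1 a) (Xn t2 b')) X) ↔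
           Wins q t' (sum (Xn (sum t1 t2) (a ^^^ b')) X)) :=
        fun b' hb' q t' => ih a b' X q t' (by omega)
      have ihX : ∀ X' ∈ optsOf X, ∀ (q : Player) (t' : Bool),
          (Wins q t' (sum (sum (Xn t1 a) (Xn t2 b)) X') ↔
           Wins q t' (sum (Xn (sum t1 t2) (a ^^^ b)) X')) :=
        fun X' hX' q t' => ih a b X' q t' (by have := sizeOf_optsOf hX'; omega)
      have hne1 : ∀ a', a' ≠ a → a' ^^^ b ≠ a ^^^ b := by
        intro a' h hc
        apply h
        have := congrArg (· ^^^ b) hc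
        simpa [Nat.xor_xor_cancel_right] using this
      have hne2 : ∀ b', b' ≠ b → a ^^^ b' ≠ a ^^^ b :=
        fun b' h hc => h (Nat.xor_right_inj.mp hc)
      have nim : ∀ c' < a ^^^ b, (∃ a' < a, a' ^^^ b = c') ∨ (∃ b' < b, a ^^^ b' = c') := by
        intro c' hc'
        rcases Nat.lt_xor_cases hc' with h | h
        · exact Or.inl ⟨c' ^^^ b, h, Nat.xor_xor_cancel_right _ _⟩
        · exact Or.inr ⟨c' ^^^ a, h, by rw [Nat.xor_comm c' a, Nat.xor_xor_cancel_left]⟩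
      by_cases hii : 0 < a ^^^ b ∨ ∃ xs, X = opts xs
      · have hR : sum (Xn (sum t1 t2) (a ^^^ b)) X =
            opts ((XnList (sum t1 t2) (a ^^^ b)).map (·.sum X) ++
                  (optsOf X).map ((Xn (sum t1 t2) (a ^^^ b)).sum ·)) :=
          sum_Xn_opts hs X hii
        have hmemR : ∀ o : Pos,
            (o ∈ (XnList (sum t1 t2) (a ^^^ b)).map (·.sum X) ++
                  (optsOf X).map ((Xn (sum t1 t2) (a ^^^ b)).sum ·)) ↔
            ((∃ c' < a ^^^ b, o = sum (Xn (sum t1 t2) c') X) ∨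
             (∃ X' ∈ optsOf X, o = sum (Xn (sum t1 t2) (a ^^^ b)) X')) := by
          intro o
          simp only [List.mem_append, List.mem_map, mem_XnList_iff]
          constructor
          · rintro (⟨x, ⟨m, hmm, rfl⟩, rfl⟩ | ⟨x, hx, rfl⟩)
            · exact Or.inl ⟨m, hmm, rfl⟩
            · exact Or.inr ⟨x, hx, rfl⟩
          · rintro (⟨c', hc', rfl⟩ | ⟨X', hX', rfl⟩)
            · exact Or.inl ⟨_, ⟨c', hc', rfl⟩, rfl⟩
            · exact Or.inr ⟨X', hX', rfl⟩
        cases tb with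
        | true =>
          rw [hL, hR, wins_true_opts, wins_true_opts]
          constructor
          · rintro ⟨o, ho, hw⟩
            rcases (hmemL o).mp ho with ⟨a', ha', rfl⟩ | ⟨b', hb', rfl⟩ | ⟨X', hX', rfl⟩
            · have hw' := (ihA a' ha' p false).mp hw
              rcases Nat.lt_trichotomy (a' ^^^ b) (a ^^^ b) with h | h | h
              · exact ⟨_, (hmemR _).mpr (Or.inl ⟨_, h, rfl⟩), hw'⟩
              · exact absurd h (hne1 a' (by omega))
              · have h2 := (wins_drop hs h X p).1 hw'
                rw [hR, wins_true_opts] at h2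
                exact h2
            · have hw' := (ihB b' hb' p false).mp hw
              rcases Nat.lt_trichotomy (a ^^^ b') (a ^^^ b) with h | h | h
              · exact ⟨_, (hmemR _).mpr (Or.inl ⟨_, h, rfl⟩), hw'⟩
              · exact absurd h (hne2 b' (by omega))
              · have h2 := (wins_drop hs h X p).1 hw'
                rw [hR, wins_true_opts] at h2
                exact h2
            · exact ⟨_, (hmemR _).mpr (Or.inr ⟨X', hX', rfl⟩), (ihX X' hX' p false).mp hw⟩
          · rintro ⟨o, ho, hw⟩
            rcases (hmemR o).mp ho with ⟨c', hc', rfl⟩ | ⟨X', hX', rfl⟩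
            · rcases nim c' hc' with ⟨a', ha', hxa⟩ | ⟨b', hb', hxb⟩
              · rw [← hxa] at hw
                exact ⟨_, (hmemL _).mpr (Or.inl ⟨a', ha', rfl⟩), (ihA a' ha' p false).mpr hw⟩
              · rw [← hxb] at hw
                exact ⟨_, (hmemL _).mpr (Or.inr (Or.inl ⟨b', hb', rfl⟩)),
                  (ihB b' hb' p false).mpr hw⟩
            · exact ⟨_, (hmemL _).mpr (Or.inr (Or.inr ⟨X', hX', rfl⟩)),
                (ihX X' hX' p false).mpr hw⟩
        | false =>
          rw [hL, hR, wins_false_opts, wins_false_opts]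
          constructor
          · intro h o ho
            rcases (hmemR o).mp ho with ⟨c', hc', rfl⟩ | ⟨X', hX', rfl⟩
            · rcases nim c' hc' with ⟨a', ha', hxa⟩ | ⟨b', hb', hxb⟩
              · rw [← hxa]
                exact (ihA a' ha' p true).mp (h _ ((hmemL _).mpr (Or.inl ⟨a', ha', rfl⟩)))
              · rw [← hxb]
                exact (ihB b' hb' p true).mp
                  (h _ ((hmemL _).mpr (Or.inr (Or.inl ⟨b', hb', rfl⟩))))
            · exact (ihX X' hX' p true).mp
                (h _ ((hmemL _).mpr (Or.inr (Or.inr ⟨X', hX', rfl⟩))))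
          · intro h o ho
            have hRfalse : Wins p false (sum (Xn (sum t1 t2) (a ^^^ b)) X) := by
              rw [hR, wins_false_opts]; exact h
            rcases (hmemL o).mp ho with ⟨a', ha', rfl⟩ | ⟨b', hb', rfl⟩ | ⟨X', hX', rfl⟩
            · refine (ihA a' ha' p true).mpr ?_
              rcases Nat.lt_trichotomy (a' ^^^ b) (a ^^^ b) with hlt | heq | hgt
              · exact h _ ((hmemR _).mpr (Or.inl ⟨_, hlt, rfl⟩))
              · exact absurd heq (hne1 a' (by omega))
              · exact (wins_drop hs hgt X p).2 hRfalse
            · refine (ihB b' hb' p true).mpr ?_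
              rcases Nat.lt_trichotomy (a ^^^ b') (a ^^^ b) with hlt | heq | hgt
              · exact h _ ((hmemR _).mpr (Or.inl ⟨_, hlt, rfl⟩))
              · exact absurd heq (hne2 b' (by omega))
              · exact (wins_drop hs hgt X p).2 hRfalse
            · exact (ihX X' hX' p true).mpr (h _ ((hmemR _).mpr (Or.inr ⟨X', hX', rfl⟩)))
      · push_neg at hii
        obtain ⟨hc0, hXopts⟩ := hii
        have hc0' : a ^^^ b = 0 := by omega
        have hab2 : a = b := by
          have := Nat.xor_eq_zero_iff.mp hc0'
          exact this
        have ha : 0 < a := by omega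
        have hXt : X = termL ∨ X = termR := by
          cases X with
          | termL => exact Or.inl rfl
          | termR => exact Or.inr rfl
          | opts xs => exact absurd rfl (hXopts xs)
        have hXo : optsOf X = [] := by rcases hXt with rfl | rfl <;> rfl
        obtain ⟨r, hu⟩ : ∃ r : Player, ∀ (q : Player) (t' : Bool),
            Wins q t' (sum (sum t1 t2) X) ↔ q = r := by
          rcases hs with hs' | hs' <;> rcases hXt with rfl | rfl <;> rw [hs']
          · exact ⟨.left, fun q t' => by
              rw [show sum termL termL = termL by simp [sum], wins_termL]⟩
          · exact ⟨.right, fun q t' => by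
              rw [show sum termL termR = termR by simp [sum], wins_termR]⟩
          · exact ⟨.right, fun q t' => by
              rw [show sum termR termL = termR by simp [sum], wins_termR]⟩
          · exact ⟨.left, fun q t' => by
              rw [show sum termR termR = termL by simp [sum], wins_termL]⟩
        have key2 : ∀ (c' : ℕ) (t' : Bool), Wins r t' (sum (Xn (sum t1 t2) c') X) := by
          intro c'
          induction c' using Nat.strong_induction_on with
          | _ c' ihc =>
            intro t'
            rcases Nat.eq_zero_or_pos c' with rfl | hcpos
            · rw [Xn_zero]; exact (hu r t').mpr rfl
            · have hopt := sum_Xn_opts hs X (Or.inl hcpos)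
              cases t' with
              | false =>
                rw [hopt, wins_false_opts]
                intro o ho
                rw [hXo] at ho
                simp only [List.map_nil, List.append_nil, List.mem_map, mem_XnList_iff] at ho
                obtain ⟨x, ⟨m, hmm, rfl⟩, rfl⟩ := ho
                exact ihc m hmm true
              | true =>
                rw [hopt]
                exact .move r _ _
                  (List.mem_append_left _ (List.mem_map.mpr ⟨_, mem_XnList hcpos, rfl⟩))
                  (ihc 0 hcpos false)
        have key1 : ∀ t' : Bool, Wins r t' (sum (sum (Xn t1 a) (Xn t2 b)) X) := by
          intro t'
          cases t' with
          | false =>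
            rw [hL, wins_false_opts]
            intro o ho
            rcases (hmemL o).mp ho with ⟨a', ha', rfl⟩ | ⟨b', hb', rfl⟩ | ⟨X', hX', _⟩
            · exact (ihA a' ha' r true).mpr (key2 _ true)
            · exact (ihB b' hb' r true).mpr (key2 _ true)
            · exact absurd hX' (by simp [hXo])
          | true =>
            rw [hL]
            refine Wins.move r _ _ ((hmemL _).mpr (Or.inl ⟨0, ha, rfl⟩)) ?_
            refine (ihA 0 ha r false).mpr ?_
            rw [Nat.zero_xor]
            exact key2 b false
        rw [hc0', Xn_zero]
        by_cases hp : p = r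
        · subst hp; exact iff_of_true (key1 tb) ((hu p tb).mpr rfl)
        · refine iff_of_false ?_ ?_
          · intro hw; exact wins_excl _ p r tb hp hw (key1 (!tb))
          · intro hw; exact hp ((hu p tb).mp hw)

lemma outcome_congr {G H : Pos}
    (h : ∀ (p : Player) (tb : Bool), Wins p tb G ↔ Wins p tb H) :
    outcome G = outcome H := by
  classical
  simp only [outcome]
  exact if_congr (h Player.left true) (if_congr (h Player.left false) rfl rfl)
    (if_congr (h Player.left false) rfl rfl)

end Pos

/-- `*L_{a} + *L_{b} ≡ *L_{a ⊕ b}`, `*L_{a} + *R_{b} ≡ *R_{a ⊕ b}`,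
`*R_{a} + *R_{b} ≡ *L_{a ⊕ b}`, where `⊕` is bitwise XOR. -/
theorem Ln_Rn_sum_xor (a b : ℕ) :
    Pos.equiv (Pos.sum (Pos.Ln a) (Pos.Ln b)) (Pos.Ln (a ^^^ b)) ∧
    Pos.equiv (Pos.sum (Pos.Ln a) (Pos.Rn b)) (Pos.Rn (a ^^^ b)) ∧
    Pos.equiv (Pos.sum (Pos.Rn a) (Pos.Rn b)) (Pos.Ln (a ^^^ b)) := by
  refine ⟨?_, ?_, ?_⟩ <;> intro X _ <;>
    refine Pos.outcome_congr (fun p tb => ?_)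
  · have h := Pos.master Pos.termL Pos.termL (Or.inl rfl) (Or.inl rfl)
      (a + b + sizeOf X + 1) a b X p tb (by omega)
    rwa [(Pos.Xn_termL a).1, (Pos.Xn_termL b).1,
      show Pos.sum Pos.termL Pos.termL = Pos.termL by simp [Pos.sum],
      (Pos.Xn_termL (a ^^^ b)).1] at h
  · have h := Pos.master Pos.termL Pos.termR (Or.inl rfl) (Or.inr rfl)
      (a + b + sizeOf X + 1) a b X p tb (by omega)
    rwa [(Pos.Xn_termL a).1, (Pos.Xn_termR b).1,
      show Pos.sum Pos.termL Pos.termR = Pos.termR by simp [Pos.sum],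
      (Pos.Xn_termR (a ^^^ b)).1] at h
  · have h := Pos.master Pos.termR Pos.termR (Or.inr rfl) (Or.inr rfl)
      (a + b + sizeOf X + 1) a b X p tb (by omega)
    rwa [(Pos.Xn_termR a).1, (Pos.Xn_termR b).1,
      show Pos.sum Pos.termR Pos.termR = Pos.termL by simp [Pos.sum],
      (Pos.Xn_termL (a ^^^ b)).1] at h
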